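/- For real numbers A > B > 1, we have B·(ln B)²/(B−1)² > A·(ln A)²/(A−1)². -/
import Mathlib

open Real Set

private lemma sinh_lt_mul_cosh {u : ℝ} (hu : 0 < u) : Real.sinh u < u * Real.cosh u := by
  have hmono : StrictMonoOn (fun u : ℝ => u * Real.cosh u - Real.sinh u) (Ici 0) := by
    apply strictMonoOn_of_deriv_pos (convex_Ici 0)
    · exact ((continuous_id.mul Real.continuous_cosh).sub Real.continuous_sinh).continuousOn
    · intro x hx
      rw [interior_Ici] at hx
      have hd : HasDerivAt (fun u : ℝ => u * Real.cosh u - Real.sinh u)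
          (1 * Real.cosh x + x * Real.sinh x - Real.cosh x) x :=
        ((hasDerivAt_id x).mul (Real.hasDerivAt_cosh x)).sub (Real.hasDerivAt_sinh x)
      rw [hd.deriv]
      have : 0 < x * Real.sinh x := mul_pos hx (Real.sinh_pos_iff.mpr hx)
      linarith
  have := hmono (mem_Ici.mpr le_rfl) (le_of_lt hu : u ∈ Ici 0) hu
  simpa using this

private lemma sinh_div_strictMono : StrictMonoOn (fun u : ℝ => Real.sinh u / u) (Ioi 0) := by
  apply strictMonoOn_of_deriv_pos (convex_Ioi 0)
  · apply ContinuousOn.div Real.continuous_sinh.continuousOn continuousOn_id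
    intro x hx; exact ne_of_gt hx
  · intro x hx
    rw [interior_Ioi] at hx
    have hx0 : x ≠ 0 := ne_of_gt hx
    have hd : HasDerivAt (fun u : ℝ => Real.sinh u / u)
        ((Real.cosh x * x - Real.sinh x * 1) / x ^ 2) x :=
      (Real.hasDerivAt_sinh x).div (hasDerivAt_id x) hx0
    rw [hd.deriv]
    apply div_pos _ (pow_pos hx 2)
    have := sinh_lt_mul_cosh hx
    nlinarith

private lemma key_eq {x : ℝ} (hx : 1 < x) :
    x * (Real.log x) ^ 2 / (x - 1) ^ 2
      = ((Real.log x / 2) / Real.sinh (Real.log x / 2)) ^ 2 := by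
  have hx0 : 0 < x := lt_trans one_pos hx
  have hlog : 0 < Real.log x := Real.log_pos hx
  have hs : Real.sinh (Real.log x / 2) = (Real.exp (Real.log x / 2) - Real.exp (-(Real.log x / 2))) / 2 := Real.sinh_eq _
  have he : Real.exp (Real.log x / 2) ^ 2 = x := by
    rw [← Real.exp_nat_mul]
    push_cast
    rw [show (2:ℝ) * (Real.log x / 2) = Real.log x by ring, Real.exp_log hx0]
  have hene : Real.exp (Real.log x / 2) * Real.exp (-(Real.log x / 2)) = 1 := by
    rw [← Real.exp_add]; simp
  have hsne : Real.sinh (Real.log x / 2) ≠ 0 :=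
    ne_of_gt (Real.sinh_pos_iff.mpr (by linarith))
  have hx1 : (x - 1) ≠ 0 := ne_of_gt (by linarith)
  have hs2 : Real.sinh (Real.log x / 2) ^ 2 = (x - 1) ^ 2 / (4 * x) := by
    have hb : Real.exp (-(Real.log x / 2)) = (Real.exp (Real.log x / 2))⁻¹ := Real.exp_neg _
    rw [hs, hb]
    have ha : Real.exp (Real.log x / 2) ≠ 0 := (Real.exp_pos _).ne'
    have hxne : x ≠ 0 := ne_of_gt hx0
    have he' : Real.exp (Real.log x / 2) * Real.exp (Real.log x / 2) = x := by
      rw [← sq]; exact he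
    field_simp
    linear_combination (4 * x * (Real.exp (Real.log x / 2) * Real.exp (Real.log x / 2)) - 4) * he'
  rw [div_pow, hs2]
  field_simp
  ring

theorem stmt_1 (A B : ℝ) (hB : 1 < B) (hBA : B < A) :
    B * (Real.log B) ^ 2 / (B - 1) ^ 2 > A * (Real.log A) ^ 2 / (A - 1) ^ 2 := by
  have hA : 1 < A := lt_trans hB hBA
  rw [key_eq hB, key_eq hA]
  set u := Real.log B / 2 with hu
  set v := Real.log A / 2 with hv
  have hu0 : 0 < u := by
    have := Real.log_pos hB; simp [hu]; linarith
  have hv0 : 0 < v := by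
    have := Real.log_pos hA; simp [hv]; linarith
  have huv : u < v := by
    have := Real.log_lt_log (lt_trans one_pos hB) hBA
    simp [hu, hv]; linarith
  have hsu : 0 < Real.sinh u := Real.sinh_pos_iff.mpr hu0
  have hsv : 0 < Real.sinh v := Real.sinh_pos_iff.mpr hv0
  have hm : Real.sinh u / u < Real.sinh v / v :=
    sinh_div_strictMono (mem_Ioi.mpr hu0) (mem_Ioi.mpr hv0) huv
  have h1 : v / Real.sinh v < u / Real.sinh u := by
    rw [div_lt_div_iff₀ hsv hsu]
    rw [div_lt_div_iff₀ hu0 hv0] at hm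
    nlinarith
  have h2 : 0 < v / Real.sinh v := div_pos hv0 hsv
  nlinarith
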